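/- Assume M₁ᵏ − L·Id ∈ S₊(H), M₁ᵏ ⪰ M₁^{k+1}, M₂ᵏ ∈ S₊(G), M₂ᵏ ⪰ M₂^{k+1} for all k ≥ 0, let (xᵏ, zᵏ, yᵏ)_{k≥0} be the sequence generated by the variable-metric ADMM algorithm, and let (x*, z*, y*) be a saddle point of the Lagrangian l. With the ergodic averages x̄ᵏ := (1/k)Σ_{i=1}^{k} xⁱ and z̄ᵏ := (1/k)Σ_{i=1}^{k} zⁱ, for all k ≥ 1: f(x̄ᵏ) + h(x̄ᵏ) + g(z̄ᵏ) + ⟨y*, Ax̄ᵏ − z̄ᵏ⟩ − (f(x*) + h(x*) + g(Ax*)) ≤ γ(x*, z*, y*)/k, where γ(x, z, y) := (c/2)‖Ax − z⁰‖² + (1/2)(‖x − x⁰‖²_{M₁⁰} + ‖z − z⁰‖²_{M₂⁰}) + (1/(2c))‖y − y⁰‖². -/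

import Mathlib

open scoped InnerProductSpace
open Filter

noncomputable section

section OpDefs

variable {E F : Type*} [NormedAddCommGroup E] [InnerProductSpace ℝ E]
  [NormedAddCommGroup F] [InnerProductSpace ℝ F]

/-- `U ∈ S₊(E)`: continuous linear, self-adjoint and positive semidefinite. -/
def IsSplusOp (U : E →L[ℝ] E) : Prop :=
  (∀ x y : E, ⟪U x, y⟫_ℝ = ⟪x, U y⟫_ℝ) ∧ ∀ x : E, 0 ≤ ⟪x, U x⟫_ℝ

/-- The squared seminorm `‖x‖²_U := ⟪x, U x⟫`. -/
def opSq (U : E →L[ℝ] E) (x : E) : ℝ := ⟪x, U x⟫_ℝ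

/-- Loewner order `U ⪰ V`. -/
def opLE (U V : E →L[ℝ] E) : Prop := ∀ x : E, ⟪x, V x⟫_ℝ ≤ ⟪x, U x⟫_ℝ

/-- `U ∈ P_α(E)`, i.e. `U ∈ S₊(E)` and `U ⪰ α·Id`. -/
def IsPalphaOp (α : ℝ) (U : E →L[ℝ] E) : Prop :=
  IsSplusOp U ∧ ∀ x : E, α * ‖x‖ ^ 2 ≤ ⟪x, U x⟫_ℝ

/-- Properness of an extended-real-valued function. -/
def ERealProper (f : E → EReal) : Prop := (∀ x, f x ≠ ⊥) ∧ ∃ x, f x ≠ ⊤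

/-- Convexity of an extended-real-valued function. -/
def ERealConvex (f : E → EReal) : Prop :=
  ∀ x y : E, ∀ a b : ℝ, 0 ≤ a → 0 ≤ b → a + b = 1 →
    f (a • x + b • y) ≤ (a : EReal) * f x + (b : EReal) * f y

/-- Weak convergence of a sequence in a Hilbert space, tested against inner products. -/
def WeakConv (u : ℕ → E) (p : E) : Prop :=
  ∀ w : E, Tendsto (fun k => ⟪u k, w⟫_ℝ) atTop (nhds ⟪p, w⟫_ℝ)

/-- The Lagrangian `l(x,z,y) = f(x) + g(z) + ⟪y, Ax - z⟫`. -/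
def Lagr (f : E → EReal) (g : F → EReal) (A : E →L[ℝ] F) (p : E) (q v : F) : EReal :=
  f p + g q + ((⟪v, A p - q⟫_ℝ : ℝ) : EReal)

/-- The Lagrangian with an additional smooth summand `h`:
`l(x,z,y) = f(x) + h(x) + g(z) + ⟪y, Ax - z⟫`. -/
def LagrH (f : E → EReal) (h : E → ℝ) (g : F → EReal) (A : E →L[ℝ] F)
    (p : E) (q v : F) : EReal :=
  f p + ((h p : ℝ) : EReal) + g q + ((⟪v, A p - q⟫_ℝ : ℝ) : EReal)

/-- `(xs, zs, ys)` is a saddle point of `l`. -/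
def IsSaddle (l : E → F → F → EReal) (xs : E) (zs ys : F) : Prop :=
  ∀ (p : E) (q v : F), l xs zs v ≤ l xs zs ys ∧ l xs zs ys ≤ l p q ys

/-- `xk1` is a minimizer of `u ↦ f u + (c/2)‖Au - zk + c⁻¹ yk‖² + (1/2)‖u - xk‖²_M`. -/
def IsXUpdate (f : E → EReal) (A : E →L[ℝ] F) (c : ℝ) (M : E →L[ℝ] E)
    (xk : E) (zk yk : F) (xk1 : E) : Prop :=
  ∀ u : E,
    f xk1 + (((c/2) * ‖A xk1 - zk + c⁻¹ • yk‖ ^ 2 + (1/2) * opSq M (xk1 - xk) : ℝ) : EReal) ≤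
    f u + (((c/2) * ‖A u - zk + c⁻¹ • yk‖ ^ 2 + (1/2) * opSq M (u - xk) : ℝ) : EReal)

/-- `xk1` is a minimizer of the `x`-subproblem with linearized smooth part:
`u ↦ f u + ⟪u - xk, ∇h(xk)⟫ + (c/2)‖Au - zk + c⁻¹ yk‖² + (1/2)‖u - xk‖²_M`. -/
def IsXUpdateGrad (f : E → EReal) (h' : E → E) (A : E →L[ℝ] F) (c : ℝ) (M : E →L[ℝ] E)
    (xk : E) (zk yk : F) (xk1 : E) : Prop :=
  ∀ u : E,
    f xk1 + ((⟪xk1 - xk, h' xk⟫_ℝ + (c/2) * ‖A xk1 - zk + c⁻¹ • yk‖ ^ 2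
        + (1/2) * opSq M (xk1 - xk) : ℝ) : EReal) ≤
    f u + ((⟪u - xk, h' xk⟫_ℝ + (c/2) * ‖A u - zk + c⁻¹ • yk‖ ^ 2
        + (1/2) * opSq M (u - xk) : ℝ) : EReal)

/-- `zk1` is a minimizer of `w ↦ g w + (c/2)‖Ax - w + c⁻¹ yk‖² + (1/2)‖w - zk‖²_M`. -/
def IsZUpdate (g : F → EReal) (c : ℝ) (M : F →L[ℝ] F)
    (Ax zk yk zk1 : F) : Prop :=
  ∀ w : F,
    g zk1 + (((c/2) * ‖Ax - zk1 + c⁻¹ • yk‖ ^ 2 + (1/2) * opSq M (zk1 - zk) : ℝ) : EReal) ≤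
    g w + (((c/2) * ‖Ax - w + c⁻¹ • yk‖ ^ 2 + (1/2) * opSq M (w - zk) : ℝ) : EReal)

end OpDefs

section AuxLemmas

variable {E F : Type*} [NormedAddCommGroup E] [InnerProductSpace ℝ E]
  [NormedAddCommGroup F] [InnerProductSpace ℝ F]

lemma key_alg0 (a b zs zk u v : F) :
    ⟪v, a - b⟫_ℝ + (1/2) * ‖a - zs + u‖ ^ 2 - (1/2) * ‖a - b + u‖ ^ 2
      + (1/2) * ‖zs - zk + u‖ ^ 2 - (1/2) * ‖a - zk + u‖ ^ 2
      - (1/2) * ‖zs - a‖ ^ 2 - (1/2) * ‖zs - b‖ ^ 2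
    = (1/2) * ‖zs - zk‖ ^ 2 - (1/2) * ‖zs - b‖ ^ 2
      + (1/2) * ‖v - u‖ ^ 2 - (1/2) * ‖v - u - (a - b)‖ ^ 2
      - (1/2) * ‖a - zk‖ ^ 2 := by
  simp only [← real_inner_self_eq_norm_sq, inner_add_left, inner_add_right,
    inner_sub_left, inner_sub_right]
  linarith [real_inner_comm a b, real_inner_comm a zs, real_inner_comm a zk,
    real_inner_comm a u, real_inner_comm a v, real_inner_comm b zs,
    real_inner_comm b zk, real_inner_comm b u, real_inner_comm b v,
    real_inner_comm zs zk, real_inner_comm zs u, real_inner_comm zs v,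
    real_inner_comm zk u, real_inner_comm zk v, real_inner_comm u v]

lemma key_alg (c : ℝ) (hc : 0 < c) (a b zs zk yk ys : F) :
    ⟪ys, a - b⟫_ℝ + (c/2) * ‖a - zs + c⁻¹ • yk‖ ^ 2 - (c/2) * ‖a - b + c⁻¹ • yk‖ ^ 2
      + (c/2) * ‖zs - zk + c⁻¹ • yk‖ ^ 2 - (c/2) * ‖a - zk + c⁻¹ • yk‖ ^ 2
      - (c/2) * ‖zs - a‖ ^ 2 - (c/2) * ‖zs - b‖ ^ 2
    ≤ (c/2) * ‖zs - zk‖ ^ 2 - (c/2) * ‖zs - b‖ ^ 2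
      + (1/(2*c)) * ‖ys - yk‖ ^ 2 - (1/(2*c)) * ‖ys - (yk + c • (a - b))‖ ^ 2 := by
  have hcne : c ≠ 0 := ne_of_gt hc
  set u := c⁻¹ • yk with hu
  set v := c⁻¹ • ys with hv
  have hys : ys = c • v := by rw [hv, smul_inv_smul₀ hcne]
  have hyk : yk = c • u := by rw [hu, smul_inv_smul₀ hcne]
  have h0 := key_alg0 a b zs zk u v
  have e1 : ⟪ys, a - b⟫_ℝ = c * ⟪v, a - b⟫_ℝ := by rw [hys, real_inner_smul_left]
  have e2 : (1/(2*c)) * ‖ys - yk‖ ^ 2 = (c/2) * ‖v - u‖ ^ 2 := by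
    rw [hys, hyk, ← smul_sub, norm_smul, mul_pow, Real.norm_eq_abs, sq_abs]
    field_simp
  have e3 : (1/(2*c)) * ‖ys - (yk + c • (a - b))‖ ^ 2 = (c/2) * ‖v - u - (a - b)‖ ^ 2 := by
    have : ys - (yk + c • (a - b)) = c • (v - u - (a - b)) := by
      rw [hys, hyk]; module
    rw [this, norm_smul, mul_pow, Real.norm_eq_abs, sq_abs]
    field_simp
  rw [e1, e2, e3]
  have h1 : c * (⟪v, a - b⟫_ℝ + (1/2) * ‖a - zs + u‖ ^ 2 - (1/2) * ‖a - b + u‖ ^ 2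
      + (1/2) * ‖zs - zk + u‖ ^ 2 - (1/2) * ‖a - zk + u‖ ^ 2
      - (1/2) * ‖zs - a‖ ^ 2 - (1/2) * ‖zs - b‖ ^ 2)
      = c * ((1/2) * ‖zs - zk‖ ^ 2 - (1/2) * ‖zs - b‖ ^ 2
      + (1/2) * ‖v - u‖ ^ 2 - (1/2) * ‖v - u - (a - b)‖ ^ 2
      - (1/2) * ‖a - zk‖ ^ 2) := by rw [h0]
  have h2 : 0 ≤ c * ‖a - zk‖ ^ 2 := by positivity
  nlinarith [h1, h2]

lemma combo_norm_sq (p q : F) (t : ℝ) :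
    ‖(1-t) • p + t • q‖ ^ 2 = (1-t) * ‖p‖ ^ 2 + t * ‖q‖ ^ 2 - t * (1-t) * ‖p - q‖ ^ 2 := by
  simp only [← real_inner_self_eq_norm_sq, inner_add_left, inner_add_right,
    inner_sub_left, inner_sub_right, real_inner_smul_left, real_inner_smul_right]
  ring

lemma combo_opSq (M : E →L[ℝ] E) (p q : E) (t : ℝ) :
    ⟪(1-t) • p + t • q, M ((1-t) • p + t • q)⟫_ℝ
      = (1-t) * ⟪p, M p⟫_ℝ + t * ⟪q, M q⟫_ℝ - t * (1-t) * ⟪p - q, M (p - q)⟫_ℝ := by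
  simp only [map_add, map_smul, map_sub, inner_add_left, inner_add_right,
    inner_sub_left, inner_sub_right, real_inner_smul_left, real_inner_smul_right]
  ring

lemma qseg_x (A : E →L[ℝ] F) (M : E →L[ℝ] E) (c : ℝ) (e xk m u0 : E) (bb : F) (t : ℝ) :
    ⟪((1-t) • m + t • u0) - xk, e⟫_ℝ + (c/2) * ‖A ((1-t) • m + t • u0) - bb‖ ^ 2
      + (1/2) * ⟪((1-t) • m + t • u0) - xk, M (((1-t) • m + t • u0) - xk)⟫_ℝ
    = (1-t) * (⟪m - xk, e⟫_ℝ + (c/2) * ‖A m - bb‖ ^ 2 + (1/2) * ⟪m - xk, M (m - xk)⟫_ℝ)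
      + t * (⟪u0 - xk, e⟫_ℝ + (c/2) * ‖A u0 - bb‖ ^ 2 + (1/2) * ⟪u0 - xk, M (u0 - xk)⟫_ℝ)
      - t * (1-t) * ((c/2) * ‖A (u0 - m)‖ ^ 2 + (1/2) * ⟪u0 - m, M (u0 - m)⟫_ℝ) := by
  have e1 : ((1-t) • m + t • u0) - xk = (1-t) • (m - xk) + t • (u0 - xk) := by module
  have e2 : A ((1-t) • m + t • u0) - bb = (1-t) • (A m - bb) + t • (A u0 - bb) := by
    rw [map_add, map_smul, map_smul]; module
  have e3 : (m - xk) - (u0 - xk) = -(u0 - m) := by module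
  have e4 : (A m - bb) - (A u0 - bb) = -(A (u0 - m)) := by rw [map_sub]; module
  rw [e1, e2, combo_norm_sq, combo_opSq, e3, e4, norm_neg, map_neg, inner_neg_neg,
    inner_add_left, real_inner_smul_left, real_inner_smul_left]
  ring

lemma qseg_z (M : F →L[ℝ] F) (c : ℝ) (zk m u0 bb : F) (t : ℝ) :
    (c/2) * ‖bb - ((1-t) • m + t • u0)‖ ^ 2
      + (1/2) * ⟪((1-t) • m + t • u0) - zk, M (((1-t) • m + t • u0) - zk)⟫_ℝ
    = (1-t) * ((c/2) * ‖bb - m‖ ^ 2 + (1/2) * ⟪m - zk, M (m - zk)⟫_ℝ)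
      + t * ((c/2) * ‖bb - u0‖ ^ 2 + (1/2) * ⟪u0 - zk, M (u0 - zk)⟫_ℝ)
      - t * (1-t) * ((c/2) * ‖u0 - m‖ ^ 2 + (1/2) * ⟪u0 - m, M (u0 - m)⟫_ℝ) := by
  have e1 : ((1-t) • m + t • u0) - zk = (1-t) • (m - zk) + t • (u0 - zk) := by module
  have e2 : bb - ((1-t) • m + t • u0) = (1-t) • (bb - m) + t • (bb - u0) := by module
  have e3 : (m - zk) - (u0 - zk) = -(u0 - m) := by module
  have e4 : (bb - m) - (bb - u0) = -(-(u0 - m)) := by module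
  rw [e1, e2, combo_norm_sq, combo_opSq, e3, e4, norm_neg, norm_neg, map_neg, inner_neg_neg]
  ring

lemma ereal_coe_of_ne (a : EReal) (hb : a ≠ ⊥) (ht : a ≠ ⊤) : ∃ r : ℝ, a = (r : EReal) :=
  ⟨a.toReal, (EReal.coe_toReal ht hb).symm⟩

omit [NormedAddCommGroup E] [InnerProductSpace ℝ E] in
lemma finite_of_min (f : E → EReal) (q : E → ℝ) (m u : E)
    (hmin : ∀ w : E, f m + ((q m : ℝ) : EReal) ≤ f w + ((q w : ℝ) : EReal))
    (Fu : ℝ) (hFu : f u = (Fu : EReal)) (hb : f m ≠ ⊥) : ∃ Fm : ℝ, f m = (Fm : EReal) := by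
  refine ereal_coe_of_ne _ hb ?_
  intro htop
  have h := hmin u
  rw [hFu, htop, EReal.top_add_coe, ← EReal.coe_add] at h
  exact (EReal.coe_lt_top _).not_ge h

lemma strong_min (f : E → EReal) (hfc : ERealConvex f) (q : E → ℝ) (Q : ℝ) (hQ : 0 ≤ Q)
    (m u : E)
    (hseg : ∀ t : ℝ, 0 ≤ t → t ≤ 1 →
      q ((1-t) • m + t • u) = (1-t) * q m + t * q u - t * (1-t) * Q)
    (hmin : ∀ w : E, f m + ((q m : ℝ) : EReal) ≤ f w + ((q w : ℝ) : EReal))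
    (Fm Fu : ℝ) (hFm : f m = (Fm : EReal)) (hFu : f u = (Fu : EReal)) :
    Fm + q m + Q ≤ Fu + q u := by
  have key : ∀ t : ℝ, 0 < t → t < 1 → Fm + q m + (1-t) * Q ≤ Fu + q u := by
    intro t ht0 ht1
    have hw := hmin ((1-t) • m + t • u)
    have hconv := hfc m u (1-t) t (by linarith) (le_of_lt ht0) (by ring)
    rw [hFm, hFu] at hconv
    rw [hFm] at hw
    have hcoe : ((1-t : ℝ) : EReal) * (Fm : EReal) + ((t : ℝ) : EReal) * (Fu : EReal)
        = (((1-t) * Fm + t * Fu : ℝ) : EReal) := by norm_cast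
    rw [hcoe] at hconv
    have h2 : (Fm : EReal) + ((q m : ℝ) : EReal)
        ≤ (((1-t) * Fm + t * Fu : ℝ) : EReal) + ((q ((1-t) • m + t • u) : ℝ) : EReal) :=
      le_trans hw (add_le_add hconv le_rfl)
    rw [← EReal.coe_add, ← EReal.coe_add, EReal.coe_le_coe_iff,
      hseg t (le_of_lt ht0) (le_of_lt ht1)] at h2
    have h3 : t * (Fm + q m + (1-t) * Q) ≤ t * (Fu + q u) := by nlinarith
    exact le_of_mul_le_mul_left h3 ht0
  by_contra hlt
  push_neg at hlt
  set ε := Fm + q m + Q - (Fu + q u) with hε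
  have hε0 : 0 < ε := by simp only [hε]; linarith
  set t := min (ε / (2 * (Q + 1))) (1/2) with htdef
  have ht0 : 0 < t := lt_min (by positivity) (by norm_num)
  have ht1 : t < 1 := lt_of_le_of_lt (min_le_right _ _) (by norm_num)
  have hk := key t ht0 ht1
  have htle : t ≤ ε / (2 * (Q + 1)) := min_le_left _ _
  have htQ : t * Q ≤ ε / 2 := by
    have h1 : t * Q ≤ (ε / (2 * (Q + 1))) * Q := mul_le_mul_of_nonneg_right htle hQ
    have h2 : (ε / (2 * (Q + 1))) * Q ≤ ε / 2 := by
      rw [div_mul_eq_mul_div, div_le_div_iff₀ (by positivity) (by norm_num)]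
      nlinarith
    linarith
  linarith

lemma ejensen (f : E → EReal) (hfc : ERealConvex f) (hfb : ∀ p, f p ≠ ⊥)
    (p : ℕ → E) (v : ℕ → ℝ) (hv : ∀ i, f (p i) = ((v i : ℝ) : EReal)) :
    ∀ K : ℕ, 1 ≤ K →
      f ((K : ℝ)⁻¹ • ∑ i ∈ Finset.range K, p i) ≤
        (((K : ℝ)⁻¹ * ∑ i ∈ Finset.range K, v i : ℝ) : EReal) := by
  intro K
  induction K with
  | zero => omega
  | succ K ih =>
    intro _
    by_cases hK : K = 0
    · subst hK
      simp [hv 0]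
    · have hK1 : 1 ≤ K := Nat.one_le_iff_ne_zero.mpr hK
      have hKR : (0:ℝ) < K := by exact_mod_cast Nat.pos_of_ne_zero hK
      have ihs := ih hK1
      set S := (K : ℝ)⁻¹ • ∑ i ∈ Finset.range K, p i with hS
      set sv := (K : ℝ)⁻¹ * ∑ i ∈ Finset.range K, v i with hsv
      have hnt : f S ≠ ⊤ := by
        intro htop; rw [htop] at ihs; exact (EReal.coe_lt_top _).not_ge ihs
      obtain ⟨t, ht⟩ := ereal_coe_of_ne _ (hfb S) hnt
      have htle : t ≤ sv := by rw [ht] at ihs; exact_mod_cast ihs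
      set a := (K : ℝ) / ((K : ℝ) + 1) with ha
      set b := 1 / ((K : ℝ) + 1) with hb
      have hcomb : ((K + 1 : ℕ) : ℝ)⁻¹ • ∑ i ∈ Finset.range (K+1), p i
          = a • S + b • p K := by
        rw [Finset.sum_range_succ, hS, smul_smul]
        have e1 : a * (K : ℝ)⁻¹ = ((K : ℝ) + 1)⁻¹ := by
          rw [ha]; field_simp
        rw [e1, smul_add]
        push_cast
        congr 1
        rw [hb, one_div]
      have step := hfc S (p K) a b (by positivity) (by positivity)
        (by rw [ha, hb]; field_simp)
      rw [ht, hv K, ← EReal.coe_mul, ← EReal.coe_mul, ← EReal.coe_add] at step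
      rw [hcomb]
      refine le_trans step ?_
      rw [EReal.coe_le_coe_iff]
      rw [Finset.sum_range_succ]
      have h1 : a * t ≤ a * sv := mul_le_mul_of_nonneg_left htle (by positivity)
      have h2 : a * sv + b * v K
          = ((K:ℝ) + 1)⁻¹ * (∑ i ∈ Finset.range K, v i + v K) := by
        rw [ha, hb, hsv]; field_simp
      push_cast
      linarith

end AuxLemmas

section CalcLemmas

variable {H : Type*} [NormedAddCommGroup H] [InnerProductSpace ℝ H] [CompleteSpace H]

lemma hasDerivAt_line (h : H → ℝ) (h' : H → H) (hgrad : ∀ p : H, HasGradientAt h (h' p) p)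
    (x d : H) (t : ℝ) :
    HasDerivAt (fun s : ℝ => h (x + s • d)) ⟪d, h' (x + t • d)⟫_ℝ t := by
  have hline : HasDerivAt (fun s : ℝ => x + s • d) d t := by
    simpa using ((hasDerivAt_id t).smul_const d).const_add x
  have hf := (hgrad (x + t • d)).hasFDerivAt
  have := hf.comp_hasDerivAt t hline
  simpa [InnerProductSpace.toDual_apply_apply, real_inner_comm, Function.comp_def] using this

lemma descent_lemma (h : H → ℝ) (h' : H → H) (L : ℝ) (hL : 0 ≤ L)
    (hgrad : ∀ p : H, HasGradientAt h (h' p) p)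
    (hlip : LipschitzWith (Real.toNNReal L) h') (x d : H) :
    h (x + d) ≤ h x + ⟪d, h' x⟫_ℝ + L/2 * ‖d‖ ^ 2 := by
  set φ : ℝ → ℝ := fun t => h (x + t • d) - t * ⟪d, h' x⟫_ℝ - L/2 * t^2 * ‖d‖^2 with hφdef
  have hφ : ∀ t : ℝ, HasDerivAt φ
      (⟪d, h' (x + t • d)⟫_ℝ - ⟪d, h' x⟫_ℝ - L * t * ‖d‖^2) t := by
    intro t
    have h1 := hasDerivAt_line h h' hgrad x d t
    have h2 : HasDerivAt (fun s : ℝ => s * ⟪d, h' x⟫_ℝ) ⟪d, h' x⟫_ℝ t := by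
      simpa using (hasDerivAt_id t).mul_const ⟪d, h' x⟫_ℝ
    have h3 : HasDerivAt (fun s : ℝ => L/2 * s^2 * ‖d‖^2) (L * t * ‖d‖^2) t := by
      have := ((hasDerivAt_pow 2 t).const_mul (L/2)).mul_const (‖d‖^2)
      refine this.congr_deriv ?_
      ring
    exact (h1.sub h2).sub h3
  have hderiv_nonpos : ∀ t ∈ interior (Set.Icc (0:ℝ) 1), deriv φ t ≤ 0 := by
    intro t ht
    rw [interior_Icc] at ht
    rw [(hφ t).deriv]
    have hCS : ⟪d, h' (x + t • d) - h' x⟫_ℝ ≤ ‖d‖ * ‖h' (x + t • d) - h' x‖ :=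
      real_inner_le_norm _ _
    have hlip' : ‖h' (x + t • d) - h' x‖ ≤ L * ‖t • d‖ := by
      have := hlip.dist_le_mul (x + t • d) x
      rw [Real.coe_toNNReal L hL] at this
      simpa [dist_eq_norm] using this
    have ht0 : (0:ℝ) ≤ t := le_of_lt ht.1
    have hns : ‖t • d‖ = t * ‖d‖ := by
      rw [norm_smul, Real.norm_eq_abs, abs_of_nonneg ht0]
    rw [hns] at hlip'
    have h5 : ⟪d, h' (x + t • d) - h' x⟫_ℝ ≤ L * t * ‖d‖^2 := by
      calc ⟪d, h' (x + t • d) - h' x⟫_ℝ ≤ ‖d‖ * ‖h' (x + t • d) - h' x‖ := hCS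
        _ ≤ ‖d‖ * (L * (t * ‖d‖)) := by
            apply mul_le_mul_of_nonneg_left _ (norm_nonneg d)
            rw [← mul_assoc] at hlip' ⊢; exact hlip'
        _ = L * t * ‖d‖^2 := by ring
    rw [inner_sub_right] at h5
    linarith
  have hanti : AntitoneOn φ (Set.Icc (0:ℝ) 1) := by
    apply antitoneOn_of_deriv_nonpos (convex_Icc 0 1)
    · exact Continuous.continuousOn (by
        rw [continuous_iff_continuousAt]; intro t; exact (hφ t).differentiableAt.continuousAt)
    · intro t ht
      exact ((hφ t).differentiableAt).differentiableWithinAt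
    · exact hderiv_nonpos
  have h01 := hanti (Set.mem_Icc.mpr ⟨le_refl 0, zero_le_one⟩)
    (Set.mem_Icc.mpr ⟨zero_le_one, le_refl 1⟩) zero_le_one
  simp only [hφdef] at h01
  simp only [one_smul, zero_smul, add_zero] at h01
  nlinarith [h01]

lemma grad_ineq (h : H → ℝ) (h' : H → H) (hconv : ConvexOn ℝ Set.univ h)
    (hgrad : ∀ p : H, HasGradientAt h (h' p) p) (p w : H) :
    h p + ⟪w - p, h' p⟫_ℝ ≤ h w := by
  set d := w - p with hd
  set φ : ℝ → ℝ := fun s => h (p + s • d) with hφdef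
  have hder : HasDerivAt φ ⟪d, h' p⟫_ℝ 0 := by
    have := hasDerivAt_line h h' hgrad p d 0
    simpa using this
  have htend : Tendsto (slope φ 0) (nhdsWithin 0 (Set.Ioi 0)) (nhds ⟪d, h' p⟫_ℝ) :=
    (hasDerivAt_iff_tendsto_slope.1 hder).mono_left
      (nhdsWithin_mono 0 (fun s hs => ne_of_gt hs))
  have hbound : ∀ᶠ t in nhdsWithin 0 (Set.Ioi 0), slope φ 0 t ≤ h w - h p := by
    filter_upwards [Ioc_mem_nhdsGT_of_mem (Set.mem_Ico.mpr ⟨le_refl 0, zero_lt_one⟩)]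
    intro t ht
    obtain ⟨ht0, ht1⟩ := ht
    have hcomb : p + t • d = (1 - t) • p + t • w := by rw [hd]; module
    have hcv := hconv.2 (Set.mem_univ p) (Set.mem_univ w)
      (show (0:ℝ) ≤ 1 - t by linarith) (le_of_lt ht0) (by ring : (1 - t) + t = 1)
    rw [slope_def_field, hφdef]
    simp only [hcomb, zero_smul, add_zero]
    rw [div_le_iff₀ (by simpa using ht0)]
    simp only [smul_eq_mul] at hcv
    nlinarith [hcv]
  have := le_of_tendsto htend hbound
  linarith

end CalcLemmas

theorem stmt10 {H G : Type*}
    [NormedAddCommGroup H] [InnerProductSpace ℝ H] [CompleteSpace H]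
    [NormedAddCommGroup G] [InnerProductSpace ℝ G] [CompleteSpace G]
    (f : H → EReal) (g : G → EReal)
    (hfp : ERealProper f) (hfc : ERealConvex f) (hfl : LowerSemicontinuous f)
    (hgp : ERealProper g) (hgc : ERealConvex g) (hgl : LowerSemicontinuous g)
    (h : H → ℝ) (h' : H → H) (L : ℝ) (hL : 0 < L)
    (hconv : ConvexOn ℝ Set.univ h)
    (hgrad : ∀ p : H, HasGradientAt h (h' p) p)
    (hlip : LipschitzWith (Real.toNNReal L) h')
    (A : H →L[ℝ] G) (c : ℝ) (hc : 0 < c)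
    (M₁ : ℕ → (H →L[ℝ] H)) (M₂ : ℕ → (G →L[ℝ] G))
    (hM₁ : ∀ k : ℕ, IsSplusOp (M₁ k)) (hM₂ : ∀ k : ℕ, IsSplusOp (M₂ k))
    (hM₁L : ∀ k : ℕ, IsSplusOp (M₁ k - L • ContinuousLinearMap.id ℝ H))
    (hM₁mono : ∀ k : ℕ, opLE (M₁ k) (M₁ (k+1)))
    (hM₂mono : ∀ k : ℕ, opLE (M₂ k) (M₂ (k+1)))
    (x : ℕ → H) (z y : ℕ → G)
    (hx : ∀ k : ℕ, IsXUpdateGrad f h' A c (M₁ k) (x k) (z k) (y k) (x (k+1)))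
    (hz : ∀ k : ℕ, IsZUpdate g c (M₂ k) (A (x (k+1))) (z k) (y k) (z (k+1)))
    (hy : ∀ k : ℕ, y (k+1) = y k + c • (A (x (k+1)) - z (k+1)))
    (xs : H) (zs ys : G)
    (hsp : IsSaddle (LagrH f h g A) xs zs ys) :
    ∀ k : ℕ, 1 ≤ k →
      LagrH f h g A ((k : ℝ)⁻¹ • ∑ i ∈ Finset.range k, x (i+1))
          ((k : ℝ)⁻¹ • ∑ i ∈ Finset.range k, z (i+1)) ys
        - (f xs + ((h xs : ℝ) : EReal) + g (A xs)) ≤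
      ((((c/2) * ‖A xs - z 0‖ ^ 2
          + (1/2) * (opSq (M₁ 0) (xs - x 0) + opSq (M₂ 0) (zs - z 0))
          + (1/(2*c)) * ‖ys - y 0‖ ^ 2) / (k : ℝ) : ℝ) : EReal) := by
  intro K hK
  -- saddle point finiteness
  obtain ⟨pf0, hpf0⟩ := hfp.2
  obtain ⟨qg0, hqg0⟩ := hgp.2
  have hlag_ne_top : LagrH f h g A xs zs ys ≠ ⊤ := by
    have h2 := (hsp pf0 qg0 ys).2
    obtain ⟨r1, hr1⟩ := ereal_coe_of_ne (f pf0) (hfp.1 pf0) hpf0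
    obtain ⟨r2, hr2⟩ := ereal_coe_of_ne (g qg0) (hgp.1 qg0) hqg0
    intro htop
    rw [htop] at h2
    unfold LagrH at h2
    rw [hr1, hr2, ← EReal.coe_add, ← EReal.coe_add, ← EReal.coe_add] at h2
    exact (EReal.coe_lt_top _).not_ge h2
  have hfxs_t : f xs ≠ ⊤ := by
    intro htop
    apply hlag_ne_top
    unfold LagrH
    rw [htop, EReal.top_add_coe, EReal.top_add_of_ne_bot (hgp.1 zs), EReal.top_add_coe]
  have hgzs_t : g zs ≠ ⊤ := by
    intro htop
    apply hlag_ne_top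
    unfold LagrH
    have hnb : f xs + ((h xs : ℝ) : EReal) ≠ ⊥ := by
      simp [EReal.add_eq_bot_iff, hfp.1 xs]
    rw [htop, EReal.add_top_of_ne_bot hnb, EReal.top_add_coe]
  obtain ⟨Fs, hFs⟩ := ereal_coe_of_ne (f xs) (hfp.1 xs) hfxs_t
  obtain ⟨Gs, hGs⟩ := ereal_coe_of_ne (g zs) (hgp.1 zs) hgzs_t
  have hAxs : A xs = zs := by
    have h1 := (hsp xs zs (ys + (A xs - zs))).1
    unfold LagrH at h1
    rw [hFs, hGs] at h1
    norm_cast at h1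
    rw [inner_add_left] at h1
    have h2 : ⟪A xs - zs, A xs - zs⟫_ℝ ≤ 0 := by linarith
    exact sub_eq_zero.mp (real_inner_self_nonpos.mp h2)
  -- finiteness of the iterates
  have hvF : ∀ i : ℕ, f (x (i+1)) = (((f (x (i+1))).toReal : ℝ) : EReal) := by
    intro i
    obtain ⟨r, hr⟩ := finite_of_min f
      (fun w => ⟪w - x i, h' (x i)⟫_ℝ + (c/2) * ‖A w - z i + c⁻¹ • y i‖ ^ 2
        + (1/2) * opSq (M₁ i) (w - x i)) (x (i+1)) xs (hx i) Fs hFs (hfp.1 _)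
    rw [hr]; norm_num
  have hvG : ∀ i : ℕ, g (z (i+1)) = (((g (z (i+1))).toReal : ℝ) : EReal) := by
    intro i
    obtain ⟨r, hr⟩ := finite_of_min g
      (fun w => (c/2) * ‖A (x (i+1)) - w + c⁻¹ • y i‖ ^ 2
        + (1/2) * opSq (M₂ i) (w - z i)) (z (i+1)) zs (hz i) Gs hGs (hgp.1 _)
    rw [hr]; norm_num
  set vF : ℕ → ℝ := fun i => (f (x (i+1))).toReal with hvFdef
  set vG : ℕ → ℝ := fun i => (g (z (i+1))).toReal with hvGdef
  set sq : ℕ → ℝ := fun k => 1/2 * opSq (M₁ k) (xs - x k) + 1/2 * opSq (M₂ k) (zs - z k)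
    + c/2 * ‖zs - z k‖ ^ 2 + 1/(2*c) * ‖ys - y k‖ ^ 2 with hsq
  set Dq : ℕ → ℝ := fun k => (vF k + h (x (k+1)) + vG k
    + ⟪ys, A (x (k+1)) - z (k+1)⟫_ℝ) - (Fs + h xs + Gs) with hDq
  have hstep : ∀ k : ℕ, Dq k ≤ sq k - sq (k+1) := by
    intro k
    have hQx : (0:ℝ) ≤ (c/2) * ‖A (xs - x (k+1))‖ ^ 2 + (1/2) * opSq (M₁ k) (xs - x (k+1)) := by
      have h1 := (hM₁ k).2 (xs - x (k+1))
      have h2 : (0:ℝ) ≤ (c/2) * ‖A (xs - x (k+1))‖ ^ 2 := by positivity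
      simp only [opSq]; linarith
    have hsegx : ∀ t : ℝ, 0 ≤ t → t ≤ 1 →
        (fun w => ⟪w - x k, h' (x k)⟫_ℝ + (c/2) * ‖A w - z k + c⁻¹ • y k‖ ^ 2
          + (1/2) * opSq (M₁ k) (w - x k)) ((1-t) • x (k+1) + t • xs)
        = (1-t) * ((fun w => ⟪w - x k, h' (x k)⟫_ℝ + (c/2) * ‖A w - z k + c⁻¹ • y k‖ ^ 2
          + (1/2) * opSq (M₁ k) (w - x k)) (x (k+1)))
        + t * ((fun w => ⟪w - x k, h' (x k)⟫_ℝ + (c/2) * ‖A w - z k + c⁻¹ • y k‖ ^ 2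
          + (1/2) * opSq (M₁ k) (w - x k)) xs)
        - t * (1-t) * ((c/2) * ‖A (xs - x (k+1))‖ ^ 2 + (1/2) * opSq (M₁ k) (xs - x (k+1))) := by
      intro t _ _
      simp only [opSq, sub_add]
      exact qseg_x A (M₁ k) c (h' (x k)) (x k) (x (k+1)) xs (z k - c⁻¹ • y k) t
    have hA := strong_min f hfc
      (fun w => ⟪w - x k, h' (x k)⟫_ℝ + (c/2) * ‖A w - z k + c⁻¹ • y k‖ ^ 2
        + (1/2) * opSq (M₁ k) (w - x k))
      ((c/2) * ‖A (xs - x (k+1))‖ ^ 2 + (1/2) * opSq (M₁ k) (xs - x (k+1))) hQx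
      (x (k+1)) xs hsegx (hx k) (vF k) Fs (hvF k) hFs
    have hQz : (0:ℝ) ≤ (c/2) * ‖zs - z (k+1)‖ ^ 2 + (1/2) * opSq (M₂ k) (zs - z (k+1)) := by
      have h1 := (hM₂ k).2 (zs - z (k+1))
      have h2 : (0:ℝ) ≤ (c/2) * ‖zs - z (k+1)‖ ^ 2 := by positivity
      simp only [opSq]; linarith
    have hsegz : ∀ t : ℝ, 0 ≤ t → t ≤ 1 →
        (fun w => (c/2) * ‖A (x (k+1)) - w + c⁻¹ • y k‖ ^ 2
          + (1/2) * opSq (M₂ k) (w - z k)) ((1-t) • z (k+1) + t • zs)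
        = (1-t) * ((fun w => (c/2) * ‖A (x (k+1)) - w + c⁻¹ • y k‖ ^ 2
          + (1/2) * opSq (M₂ k) (w - z k)) (z (k+1)))
        + t * ((fun w => (c/2) * ‖A (x (k+1)) - w + c⁻¹ • y k‖ ^ 2
          + (1/2) * opSq (M₂ k) (w - z k)) zs)
        - t * (1-t) * ((c/2) * ‖zs - z (k+1)‖ ^ 2 + (1/2) * opSq (M₂ k) (zs - z (k+1))) := by
      intro t _ _
      simp only [opSq, sub_add_eq_add_sub]
      exact qseg_z (M₂ k) c (z k) (z (k+1)) zs (A (x (k+1)) + c⁻¹ • y k) t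
    have hB := strong_min g hgc
      (fun w => (c/2) * ‖A (x (k+1)) - w + c⁻¹ • y k‖ ^ 2 + (1/2) * opSq (M₂ k) (w - z k))
      ((c/2) * ‖zs - z (k+1)‖ ^ 2 + (1/2) * opSq (M₂ k) (zs - z (k+1))) hQz
      (z (k+1)) zs hsegz (hz k) (vG k) Gs (hvG k) hGs
    simp only [map_sub, hAxs] at hA
    have hC := descent_lemma h h' L (le_of_lt hL) hgrad hlip (x k) (x (k+1) - x k)
    rw [show x k + (x (k+1) - x k) = x (k+1) from by abel] at hC
    have hD := grad_ineq h h' hconv hgrad (x k) xs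
    have hE : L * ‖x (k+1) - x k‖ ^ 2 ≤ opSq (M₁ k) (x (k+1) - x k) := by
      have h1 := (hM₁L k).2 (x (k+1) - x k)
      simp only [ContinuousLinearMap.sub_apply, ContinuousLinearMap.smul_apply,
        ContinuousLinearMap.id_apply] at h1
      rw [inner_sub_right, real_inner_smul_right, real_inner_self_eq_norm_sq] at h1
      simp only [opSq]; linarith
    have hFkey := key_alg c hc (A (x (k+1))) (z (k+1)) zs (z k) (y k) ys
    have hmono1 : opSq (M₁ (k+1)) (xs - x (k+1)) ≤ opSq (M₁ k) (xs - x (k+1)) :=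
      hM₁mono k _
    have hmono2 : opSq (M₂ (k+1)) (zs - z (k+1)) ≤ opSq (M₂ k) (zs - z (k+1)) :=
      hM₂mono k _
    have hS2pos : (0:ℝ) ≤ opSq (M₂ k) (z (k+1) - z k) := (hM₂ k).2 _
    simp only [hDq, hsq]
    rw [hy k]
    beta_reduce at hA hB
    simp only [opSq] at hA hB hE hmono1 hmono2 hS2pos ⊢
    linarith [hA, hB, hC, hD, hE, hFkey, hmono1, hmono2, hS2pos]
  have htel : ∀ n : ℕ, ∑ i ∈ Finset.range n, Dq i ≤ sq 0 - sq n := by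
    intro n
    induction n with
    | zero => simp
    | succ n ih =>
      rw [Finset.sum_range_succ]
      have := hstep n
      linarith
  have hsqK : (0:ℝ) ≤ sq K := by
    have h1 := (hM₁ K).2 (xs - x K)
    have h2 := (hM₂ K).2 (zs - z K)
    have h3 : (0:ℝ) ≤ c/2 * ‖zs - z K‖ ^ 2 := by positivity
    have h4 : (0:ℝ) ≤ 1/(2*c) * ‖ys - y K‖ ^ 2 := by positivity
    simp only [hsq, opSq]
    linarith
  have hsumD : ∑ i ∈ Finset.range K, Dq i ≤ sq 0 := by
    have := htel K; linarith
  -- Jensen steps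
  have hKpos : (0:ℝ) < K := by exact_mod_cast Nat.pos_of_ne_zero (by omega)
  have hKne : (K:ℝ) ≠ 0 := ne_of_gt hKpos
  have hJf := ejensen f hfc hfp.1 (fun i => x (i+1)) vF hvF K hK
  have hJg := ejensen g hgc hgp.1 (fun i => z (i+1)) vG hvG K hK
  beta_reduce at hJf hJg
  have hconvE : ERealConvex (fun p : H => ((h p : ℝ) : EReal)) := by
    intro x1 y1 a b ha hb hab
    simp only
    rw [← EReal.coe_mul, ← EReal.coe_mul, ← EReal.coe_add, EReal.coe_le_coe_iff]
    have := hconv.2 (Set.mem_univ x1) (Set.mem_univ y1) ha hb hab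
    simpa using this
  have hJh' := ejensen (fun p : H => ((h p : ℝ) : EReal)) hconvE
    (fun p => EReal.coe_ne_bot _) (fun i => x (i+1)) (fun i => h (x (i+1)))
    (fun i => rfl) K hK
  have hJh : h ((K:ℝ)⁻¹ • ∑ i ∈ Finset.range K, x (i+1))
      ≤ (K:ℝ)⁻¹ * ∑ i ∈ Finset.range K, h (x (i+1)) := by
    beta_reduce at hJh'
    exact_mod_cast hJh'
  set xb := (K:ℝ)⁻¹ • ∑ i ∈ Finset.range K, x (i+1) with hxb
  set zb := (K:ℝ)⁻¹ • ∑ i ∈ Finset.range K, z (i+1) with hzb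
  have hfxb_t : f xb ≠ ⊤ := by
    intro htop; rw [hxb] at htop; rw [htop] at hJf; exact (EReal.coe_lt_top _).not_ge hJf
  obtain ⟨tF, htF⟩ := ereal_coe_of_ne (f xb) (hfp.1 xb) hfxb_t
  have htFle : tF ≤ (K:ℝ)⁻¹ * ∑ i ∈ Finset.range K, vF i := by
    rw [hxb] at htF; rw [htF] at hJf; exact_mod_cast hJf
  have hgzb_t : g zb ≠ ⊤ := by
    intro htop; rw [hzb] at htop; rw [htop] at hJg; exact (EReal.coe_lt_top _).not_ge hJg
  obtain ⟨tG, htG⟩ := ereal_coe_of_ne (g zb) (hgp.1 zb) hgzb_t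
  have htGle : tG ≤ (K:ℝ)⁻¹ * ∑ i ∈ Finset.range K, vG i := by
    rw [hzb] at htG; rw [htG] at hJg; exact_mod_cast hJg
  have hlin : ⟪ys, A xb - zb⟫_ℝ
      = (K:ℝ)⁻¹ * ∑ i ∈ Finset.range K, ⟪ys, A (x (i+1)) - z (i+1)⟫_ℝ := by
    rw [hxb, hzb, map_smul, map_sum, ← smul_sub, ← Finset.sum_sub_distrib,
      real_inner_smul_right, inner_sum]
  have hDsum : ∑ i ∈ Finset.range K, Dq i
      = (∑ i ∈ Finset.range K, vF i) + (∑ i ∈ Finset.range K, h (x (i+1)))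
        + (∑ i ∈ Finset.range K, vG i)
        + (∑ i ∈ Finset.range K, ⟪ys, A (x (i+1)) - z (i+1)⟫_ℝ)
        - K * (Fs + h xs + Gs) := by
    simp only [hDq]
    rw [Finset.sum_sub_distrib, Finset.sum_add_distrib, Finset.sum_add_distrib,
      Finset.sum_add_distrib, Finset.sum_const, Finset.card_range, nsmul_eq_mul]
  -- final assembly
  unfold LagrH
  rw [htF, htG, hlin, hAxs, hFs, hGs]
  have hhxb := hJh
  norm_cast
  have hγ : ((c/2) * ‖zs - z 0‖ ^ 2
      + (1/2) * (opSq (M₁ 0) (xs - x 0) + opSq (M₂ 0) (zs - z 0))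
      + (1/(2*c)) * ‖ys - y 0‖ ^ 2) / (K : ℝ) = (K:ℝ)⁻¹ * sq 0 := by
    simp only [hsq]
    field_simp
    try ring
  rw [hγ]
  have hmul : (K:ℝ)⁻¹ * (∑ i ∈ Finset.range K, Dq i) ≤ (K:ℝ)⁻¹ * sq 0 :=
    mul_le_mul_of_nonneg_left hsumD (by positivity)
  rw [hDsum] at hmul
  have hexp : (K:ℝ)⁻¹ * ((∑ i ∈ Finset.range K, vF i) + (∑ i ∈ Finset.range K, h (x (i+1)))
        + (∑ i ∈ Finset.range K, vG i)
        + (∑ i ∈ Finset.range K, ⟪ys, A (x (i+1)) - z (i+1)⟫_ℝ)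
        - K * (Fs + h xs + Gs))
      = (K:ℝ)⁻¹ * (∑ i ∈ Finset.range K, vF i)
        + (K:ℝ)⁻¹ * (∑ i ∈ Finset.range K, h (x (i+1)))
        + (K:ℝ)⁻¹ * (∑ i ∈ Finset.range K, vG i)
        + (K:ℝ)⁻¹ * (∑ i ∈ Finset.range K, ⟪ys, A (x (i+1)) - z (i+1)⟫_ℝ)
        - (Fs + h xs + Gs) := by
    field_simp
    try ring
  rw [hexp] at hmul
  linarith [htFle, htGle, hhxb, hmul]
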